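/- arXiv:2404.19449 — 5 statements merged into one kernel-verified Lean document; each statement's English description precedes it below -/
import Mathlib

section
/- Let a_max ≥ 0, let (a_i)_{i≥1} be a sequence of nonnegative real numbers, and let (X_i)_{i≥0} satisfy X_0 = 0 and X_{i+1} = max(X_i − a_max, 0) + a_{i+1} for all i ≥ 0. If lim_{n→∞} X_n / n = 0 (the queue is rate stable), then limsup_{n→∞} (1/n) · Σ_{i=1}^{n} a_i ≤ a_max. -/
/-- Rate stability of the virtual queue implies the long-run time-averaged
arrival rate is at most a_max (deterministic Proposition 1). -/
theorem rate_stable_queue_average_arrival (amax : ℝ) (hamax : 0 ≤ amax)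
    (a : ℕ → ℝ) (ha : ∀ i, 1 ≤ i → 0 ≤ a i)
    (X : ℕ → ℝ) (hX0 : X 0 = 0)
    (hXrec : ∀ i, X (i + 1) = max (X i - amax) 0 + a (i + 1))
    (hstable : Filter.Tendsto (fun n : ℕ => X n / (n : ℝ)) Filter.atTop (nhds 0)) :
    Filter.limsup (fun n : ℕ => (1 / (n : ℝ)) * ∑ i ∈ Finset.Icc 1 n, a i)
      Filter.atTop ≤ amax := by
  -- key: Σ_{i=1}^n a i ≤ X n + n * amax
  have key : ∀ n : ℕ, ∑ i ∈ Finset.Icc 1 n, a i ≤ X n + n * amax := by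
    intro n
    induction n with
    | zero => simp [hX0]
    | succ n ih =>
      rw [Finset.sum_Icc_succ_top (by omega : 1 ≤ n + 1)]
      have h1 : X n - amax ≤ max (X n - amax) 0 := le_max_left _ _
      have := hXrec n
      push_cast
      nlinarith [this, h1, ih]
  -- f n ≤ X n / n + amax for n ≥ 1
  have hle : ∀ᶠ n : ℕ in Filter.atTop,
      (1 / (n : ℝ)) * ∑ i ∈ Finset.Icc 1 n, a i ≤ X n / n + amax := by
    filter_upwards [Filter.eventually_ge_atTop 1] with n hn
    have hn0 : (0 : ℝ) < n := by exact_mod_cast hn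
    rw [one_div, inv_mul_le_iff₀ hn0] at *
    calc ∑ i ∈ Finset.Icc 1 n, a i ≤ X n + n * amax := key n
      _ = n * (X n / n + amax) := by field_simp
  have htend : Filter.Tendsto (fun n : ℕ => X n / n + amax) Filter.atTop (nhds amax) := by
    simpa using hstable.add tendsto_const_nhds
  refine le_of_forall_pos_le_add ?_
  intro ε hε
  have hev : ∀ᶠ n : ℕ in Filter.atTop,
      (1 / (n : ℝ)) * ∑ i ∈ Finset.Icc 1 n, a i ≤ amax + ε := by
    filter_upwards [hle, htend.eventually (gt_mem_nhds (lt_add_of_pos_right amax hε))]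
      with n h1 h2
    exact h1.trans h2.le
  exact Filter.limsup_le_of_le (Filter.isCoboundedUnder_le_of_eventually_le Filter.atTop (x := 0) <| by
    filter_upwards [Filter.eventually_ge_atTop 1] with n hn
    have : (0:ℝ) ≤ n := by positivity
    exact mul_nonneg (by positivity) (Finset.sum_nonneg fun i hi => ha i (Finset.mem_Icc.mp hi).1)) hev
end

section
/- Let (Ω, μ) be a probability space, let a_max ≥ 0, let (a_i)_{i≥1} be a sequence of nonnegative integrable random variables on Ω, and let (X_i)_{i≥0} be random variables with X_0 = 0 almost everywhere and X_{i+1} = max(X_i − a_max, 0) + a_{i+1} almost everywhere for all i ≥ 0. If lim_{n→∞} (1/n) · E[|X_n|] = 0 (the queue is mean rate stable), then limsup_{n→∞} (1/n) · Σ_{i=1}^{n} E[a_i] ≤ a_max. -/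
open MeasureTheory

/-- Proposition 1: mean rate stability of the virtual AoI queue implies the
long-term time-averaged expected arrival is bounded by a_max. -/
theorem mean_rate_stable_queue_average_arrival
    {Ω : Type*} [MeasurableSpace Ω] (μ : Measure Ω) [IsProbabilityMeasure μ]
    (amax : ℝ) (hamax : 0 ≤ amax)
    (a : ℕ → Ω → ℝ) (ha_nonneg : ∀ i ω, 0 ≤ a i ω)
    (ha_int : ∀ i, Integrable (a i) μ)
    (X : ℕ → Ω → ℝ) (hX_meas : ∀ i, Measurable (X i))
    (hX0 : ∀ᵐ ω ∂μ, X 0 ω = 0)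
    (hXrec : ∀ i, ∀ᵐ ω ∂μ, X (i + 1) ω = max (X i ω - amax) 0 + a (i + 1) ω)
    (hstable : Filter.Tendsto (fun n : ℕ => (1 / (n : ℝ)) * ∫ ω, |X n ω| ∂μ)
      Filter.atTop (nhds 0)) :
    Filter.limsup
      (fun n : ℕ => (1 / (n : ℝ)) * ∑ i ∈ Finset.Icc 1 n, ∫ ω, a i ω ∂μ)
      Filter.atTop ≤ amax := by
  -- integrability of X n
  have hXint : ∀ n, Integrable (X n) μ := by
    intro n
    induction n with
    | zero =>
      exact (integrable_const (0 : ℝ)).congr (hX0.mono fun ω h => h.symm)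
    | succ n ih =>
      have hmax : Integrable (fun ω => max (X n ω - amax) 0) μ := by
        refine ih.mono ?_ ?_
        · exact (((hX_meas n).sub measurable_const).max measurable_const).aestronglyMeasurable
        · filter_upwards with ω
          have h1 : max (X n ω - amax) 0 ≤ |X n ω| := by
            apply max_le
            · have := le_abs_self (X n ω); linarith
            · exact abs_nonneg _
          have h2 : (0:ℝ) ≤ max (X n ω - amax) 0 := le_max_right _ _
          simpa [Real.norm_eq_abs, abs_of_nonneg h2] using h1
      exact (hmax.add (ha_int (n + 1))).congr ((hXrec n).mono fun ω h => h.symm)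
  -- pointwise lower bound a.e.
  have hlow : ∀ n, ∀ᵐ ω ∂μ,
      0 ≤ X n ω ∧ (∑ i ∈ Finset.Icc 1 n, a i ω) - n * amax ≤ X n ω := by
    intro n
    induction n with
    | zero =>
      filter_upwards [hX0] with ω h0
      simp [h0]
    | succ n ih =>
      filter_upwards [ih, hXrec n] with ω hih hr
      obtain ⟨h0, hs⟩ := hih
      constructor
      · rw [hr]
        exact add_nonneg (le_max_right _ _) (ha_nonneg _ ω)
      · rw [hr, Finset.sum_Icc_succ_top (by omega : 1 ≤ n + 1)]
        have hm := le_max_left (X n ω - amax) 0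
        push_cast
        linarith
  -- integral lower bound
  have hS : ∀ n : ℕ,
      (∑ i ∈ Finset.Icc 1 n, ∫ ω, a i ω ∂μ) - n * amax ≤ ∫ ω, |X n ω| ∂μ := by
    intro n
    have hint1 : Integrable (fun ω => (∑ i ∈ Finset.Icc 1 n, a i ω) - n * amax) μ :=
      (integrable_finset_sum _ fun i _ => ha_int i).sub (integrable_const _)
    have hmono : ∫ ω, ((∑ i ∈ Finset.Icc 1 n, a i ω) - n * amax) ∂μ
        ≤ ∫ ω, |X n ω| ∂μ := by
      refine integral_mono_ae hint1 (hXint n).abs ?_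
      filter_upwards [hlow n] with ω h
      exact h.2.trans (le_abs_self _)
    rw [integral_sub (integrable_finset_sum _ fun i _ => ha_int i) (integrable_const _),
      integral_finset_sum _ fun i _ => ha_int i, integral_const,
      probReal_univ, smul_eq_mul, one_mul] at hmono
    exact hmono
  -- compare with convergent upper bound
  set f : ℕ → ℝ := fun n => (1 / (n : ℝ)) * ∑ i ∈ Finset.Icc 1 n, ∫ ω, a i ω ∂μ
  set g : ℕ → ℝ := fun n => amax + (1 / (n : ℝ)) * ∫ ω, |X n ω| ∂μ
  have hfg : ∀ n, f n ≤ g n := by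
    intro n
    rcases Nat.eq_zero_or_pos n with rfl | hn
    · have h0 : ∫ ω, |X 0 ω| ∂μ = 0 := by
        rw [integral_eq_zero_iff_of_nonneg (fun ω => abs_nonneg _) (hXint 0).abs]
        · filter_upwards [hX0] with ω h; simp [h]
      simp [f, g, h0, hamax]
    · have hn' : (0:ℝ) < n := by exact_mod_cast hn
      have h2 := mul_le_mul_of_nonneg_left (hS n) (le_of_lt (one_div_pos.mpr hn'))
      have h3 : (1 / (n : ℝ)) * ((n : ℝ) * amax) = amax := by
        field_simp
      rw [mul_sub, h3] at h2
      simp only [f, g]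
      linarith
  have hfnonneg : ∀ n, 0 ≤ f n := by
    intro n
    apply mul_nonneg (by positivity)
    exact Finset.sum_nonneg fun i _ => integral_nonneg (ha_nonneg i)
  have hgto : Filter.Tendsto g Filter.atTop (nhds amax) := by
    have h := (tendsto_const_nhds (x := amax) (f := Filter.atTop)).add hstable
    rw [add_zero] at h
    exact h
  calc Filter.limsup f Filter.atTop
      ≤ Filter.limsup g Filter.atTop := by
        refine Filter.limsup_le_limsup (Filter.Eventually.of_forall hfg) ?_ ?_
        · exact (Filter.isBoundedUnder_of ⟨0, hfnonneg⟩).isCoboundedUnder_le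
        · exact hgto.isBoundedUnder_le
    _ = amax := hgto.limsup_eq
end

section
/- Let M be a finite index set, β_m ∈ {0,1} with Σ_{m∈M} β_m ≤ 1, P_m ∈ [0,1], and let a ≥ 0, X ≥ 0, V ≥ 0, a_max ≥ 0 be real numbers. Set a' = (1 − Σ_{m∈M} β_m·P_m)·(a + 1) and X' = max(X − a_max, 0) + a'. Then (1/2)·(X'² − X²) + V·a' ≤ B − Σ_{m∈M} β_m·P_m·(V + X)·(a + 1), where B = (1/2)·(a² + 2(X + V + 1)·a + a_max² + 2X + 2V + 1) − X·a_max. -/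
/-- Per-queue deterministic drift-plus-penalty upper bound (Proposition 2). -/
theorem drift_plus_penalty_bound {M : Type*} [Fintype M]
    (β : M → ℝ) (hβ : ∀ m, β m = 0 ∨ β m = 1) (hβsum : ∑ m, β m ≤ 1)
    (P : M → ℝ) (hP : ∀ m, 0 ≤ P m ∧ P m ≤ 1)
    (a X V amax : ℝ) (ha : 0 ≤ a) (hX : 0 ≤ X) (hV : 0 ≤ V) (hamax : 0 ≤ amax)
    (a' X' B : ℝ)
    (ha' : a' = (1 - ∑ m, β m * P m) * (a + 1))
    (hX' : X' = max (X - amax) 0 + a')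
    (hB : B = (1 / 2) * (a ^ 2 + 2 * (X + V + 1) * a + amax ^ 2 + 2 * X + 2 * V + 1)
      - X * amax) :
    (1 / 2) * (X' ^ 2 - X ^ 2) + V * a'
      ≤ B - ∑ m, β m * P m * (V + X) * (a + 1) := by
  set s := ∑ m, β m * P m with hs
  have hs0 : 0 ≤ s := Finset.sum_nonneg fun m _ => by
    rcases hβ m with h | h <;> simp [h, (hP m).1]
  have hs1 : s ≤ 1 := by
    refine le_trans (Finset.sum_le_sum fun m _ => ?_) hβsum
    rcases hβ m with h | h <;> simp [h, (hP m).2]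
  have hsum : ∑ m, β m * P m * (V + X) * (a + 1) = s * (V + X) * (a + 1) := by
    rw [hs, ← Finset.sum_mul, ← Finset.sum_mul]
  rw [hsum]
  have ha'0 : 0 ≤ a' := by
    rw [ha']; exact mul_nonneg (by linarith) (by linarith)
  have ha'le : a' ≤ a + 1 := by
    rw [ha']
    nlinarith
  have hm0 : 0 ≤ max (X - amax) 0 := le_max_right _ _
  have hmX : max (X - amax) 0 ≤ X := max_le (by linarith) hX
  have hmsq : (max (X - amax) 0) ^ 2 ≤ (X - amax) ^ 2 := by
    rcases max_cases (X - amax) 0 with ⟨h, _⟩ | ⟨h, _⟩ <;> rw [h] <;> nlinarith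
  subst hX' hB
  nlinarith [mul_nonneg (mul_nonneg hm0 ha'0) hm0, mul_nonneg hm0 ha'0,
    mul_le_mul_of_nonneg_right hmX ha'0, mul_le_mul_of_nonneg_right ha'le ha'0,
    sq_nonneg a', sq_nonneg (a + 1 - a')]
end

section
/- For all real constants A > 0 and B > 0, the function f(x, y) = log((A/(x·y)) + B) is strictly convex on the open positive quadrant {(x, y) ∈ ℝ² : x > 0, y > 0}. -/
open Set

/-- The key 1D lemma: along an affine line staying in the positive quadrant,
`t ↦ log (A / ((x+t·dx)(y+t·dy)) + B)` is strictly convex on `[0,1]`. -/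
lemma aux_strictConvexOn_line (A B x y dx dy : ℝ) (hA : 0 < A) (hB : 0 < B)
    (hX : ∀ t ∈ Icc (0:ℝ) 1, 0 < x + t * dx)
    (hY : ∀ t ∈ Icc (0:ℝ) 1, 0 < y + t * dy)
    (hd : dx ≠ 0 ∨ dy ≠ 0) :
    StrictConvexOn ℝ (Icc (0:ℝ) 1)
      (fun t => Real.log (A / ((x + t * dx) * (y + t * dy)) + B)) := by
  set g : ℝ → ℝ := fun t => Real.log (A / ((x + t * dx) * (y + t * dy)) + B) with hg
  set G : ℝ → ℝ := fun t =>
    -A * (dx * (y + t * dy) + dy * (x + t * dx)) /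
      ((x + t * dx) * (y + t * dy) * (A + B * ((x + t * dx) * (y + t * dy)))) with hG
  -- basic derivative facts
  have hXd : ∀ t : ℝ, HasDerivAt (fun t => x + t * dx) dx t := fun t =>
    (hasDerivAt_mul_const dx).const_add x
  have hYd : ∀ t : ℝ, HasDerivAt (fun t => y + t * dy) dy t := fun t =>
    (hasDerivAt_mul_const dy).const_add y
  have hg' : ∀ t ∈ Ioo (0:ℝ) 1, HasDerivAt g (G t) t := by
    intro t ht
    have htI : t ∈ Icc (0:ℝ) 1 := Ioo_subset_Icc_self ht
    have hXt := hX t htI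
    have hYt := hY t htI
    have hPt : 0 < (x + t * dx) * (y + t * dy) := mul_pos hXt hYt
    have hP : HasDerivAt (fun t => (x + t * dx) * (y + t * dy))
        (dx * (y + t * dy) + (x + t * dx) * dy) t := (hXd t).mul (hYd t)
    have hu : HasDerivAt (fun t => A / ((x + t * dx) * (y + t * dy)) + B)
        ((0 * ((x + t * dx) * (y + t * dy)) -
          A * (dx * (y + t * dy) + (x + t * dx) * dy)) /
            ((x + t * dx) * (y + t * dy)) ^ 2) t :=
      ((hasDerivAt_const t A).div hP hPt.ne').add_const B
    have hupos : 0 < A / ((x + t * dx) * (y + t * dy)) + B :=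
      add_pos (div_pos hA hPt) hB
    have := hu.log hupos.ne'
    convert this using 1
    rw [hG]
    have hW : 0 < A + B * ((x + t * dx) * (y + t * dy)) :=
      add_pos hA (mul_pos hB hPt)
    beta_reduce
    rw [div_add' _ _ _ hPt.ne', div_div_div_eq, div_eq_div_iff (by positivity) (by positivity)]
    ring
  have hG' : ∀ t ∈ Ioo (0:ℝ) 1,
      HasDerivAt G
        ((-A * (dx * dy + dy * dx) *
            ((x + t * dx) * (y + t * dy) * (A + B * ((x + t * dx) * (y + t * dy)))) -
          -A * (dx * (y + t * dy) + dy * (x + t * dx)) *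
            ((dx * (y + t * dy) + (x + t * dx) * dy) *
                (A + B * ((x + t * dx) * (y + t * dy))) +
              (x + t * dx) * (y + t * dy) *
                (B * (dx * (y + t * dy) + (x + t * dx) * dy)))) /
          ((x + t * dx) * (y + t * dy) * (A + B * ((x + t * dx) * (y + t * dy)))) ^ 2) t := by
    intro t ht
    have htI : t ∈ Icc (0:ℝ) 1 := Ioo_subset_Icc_self ht
    have hXt := hX t htI
    have hYt := hY t htI
    have hPt : 0 < (x + t * dx) * (y + t * dy) := mul_pos hXt hYt
    have hW : 0 < A + B * ((x + t * dx) * (y + t * dy)) := add_pos hA (mul_pos hB hPt)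
    have hP : HasDerivAt (fun t => (x + t * dx) * (y + t * dy))
        (dx * (y + t * dy) + (x + t * dx) * dy) t := (hXd t).mul (hYd t)
    have hN : HasDerivAt (fun t => -A * (dx * (y + t * dy) + dy * (x + t * dx)))
        (-A * (dx * dy + dy * dx)) t :=
      (((hYd t).const_mul dx).add ((hXd t).const_mul dy)).const_mul (-A)
    have hD : HasDerivAt
        (fun t => (x + t * dx) * (y + t * dy) * (A + B * ((x + t * dx) * (y + t * dy))))
        ((dx * (y + t * dy) + (x + t * dx) * dy) *
            (A + B * ((x + t * dx) * (y + t * dy))) +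
          (x + t * dx) * (y + t * dy) *
            (B * (dx * (y + t * dy) + (x + t * dx) * dy))) t :=
      hP.mul ((hP.const_mul B).const_add A)
    exact hN.div hD (mul_pos hPt hW).ne'
  apply strictConvexOn_of_deriv2_pos (convex_Icc 0 1)
  · -- continuity
    have hXc : Continuous fun t : ℝ => x + t * dx := by continuity
    have hYc : Continuous fun t : ℝ => y + t * dy := by continuity
    have hPc : ContinuousOn (fun t : ℝ => (x + t * dx) * (y + t * dy)) (Icc 0 1) :=
      (hXc.mul hYc).continuousOn
    have huc : ContinuousOn (fun t : ℝ => A / ((x + t * dx) * (y + t * dy)) + B) (Icc 0 1) :=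
      ((continuousOn_const.div hPc fun t htI =>
        (mul_pos (hX t htI) (hY t htI)).ne').add continuousOn_const)
    exact huc.log fun t htI => (add_pos (div_pos hA (mul_pos (hX t htI) (hY t htI))) hB).ne'
  · intro t ht
    rw [interior_Icc] at ht
    have htI : t ∈ Icc (0:ℝ) 1 := Ioo_subset_Icc_self ht
    have hXt := hX t htI
    have hYt := hY t htI
    have hPt : 0 < (x + t * dx) * (y + t * dy) := mul_pos hXt hYt
    have hW : 0 < A + B * ((x + t * dx) * (y + t * dy)) := add_pos hA (mul_pos hB hPt)
    have hEq : deriv g =ᶠ[nhds t] G := by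
      filter_upwards [Ioo_mem_nhds ht.1 ht.2] with s hs using (hg' s hs).deriv
    have h2 : deriv^[2] g t = deriv (deriv g) t := rfl
    rw [h2, hEq.deriv_eq, (hG' t ht).deriv]
    apply div_pos
    · -- numerator positivity
      have hkey : (-A * (dx * dy + dy * dx) *
            ((x + t * dx) * (y + t * dy) * (A + B * ((x + t * dx) * (y + t * dy)))) -
          -A * (dx * (y + t * dy) + dy * (x + t * dx)) *
            ((dx * (y + t * dy) + (x + t * dx) * dy) *
                (A + B * ((x + t * dx) * (y + t * dy))) +
              (x + t * dx) * (y + t * dy) *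
                (B * (dx * (y + t * dy) + (x + t * dx) * dy)))) =
          A * (A * ((dx * (y + t * dy)) ^ 2 + (dy * (x + t * dx)) ^ 2) +
            2 * B * ((x + t * dx) * (y + t * dy)) *
              ((dx * (y + t * dy)) ^ 2 + (dy * (x + t * dx)) ^ 2 +
                dx * (y + t * dy) * (dy * (x + t * dx)))) := by ring
      rw [hkey]
      have hab : 0 < (dx * (y + t * dy)) ^ 2 + (dy * (x + t * dx)) ^ 2 := by
        rcases hd with h | h
        · have : dx * (y + t * dy) ≠ 0 := mul_ne_zero h hYt.ne'
          positivity
        · have : dy * (x + t * dx) ≠ 0 := mul_ne_zero h hXt.ne'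
          positivity
      set a := dx * (y + t * dy) with ha
      set b := dy * (x + t * dx) with hb
      set P := (x + t * dx) * (y + t * dy) with hP
      have h1 : 0 < B * P * (a ^ 2 + b ^ 2) := mul_pos (mul_pos hB hPt) hab
      have h2 : 0 ≤ B * P * (a + b) ^ 2 := mul_nonneg (mul_pos hB hPt).le (sq_nonneg _)
      have h4 : 0 < A * (a ^ 2 + b ^ 2) + 2 * B * P * (a ^ 2 + b ^ 2 + a * b) := by
        nlinarith [mul_pos hA hab]
      exact mul_pos hA h4
    · positivity

/-- Proposition 3 (core claim): f(x,y) = log(A/(x·y) + B) is strictly convex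
on the open positive quadrant. -/
theorem strictConvexOn_log_inv_prod (A B : ℝ) (hA : 0 < A) (hB : 0 < B) :
    StrictConvexOn ℝ {p : ℝ × ℝ | 0 < p.1 ∧ 0 < p.2}
      (fun p : ℝ × ℝ => Real.log (A / (p.1 * p.2) + B)) := by
  constructor
  · have : {p : ℝ × ℝ | 0 < p.1 ∧ 0 < p.2} = Ioi (0:ℝ) ×ˢ Ioi (0:ℝ) := by
      ext p; simp [Set.mem_prod]
    rw [this]
    exact (convex_Ioi 0).prod (convex_Ioi 0)
  · rintro p ⟨hp1, hp2⟩ q ⟨hq1, hq2⟩ hpq a b ha hb hab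
    set dx := q.1 - p.1 with hdx
    set dy := q.2 - p.2 with hdy
    have hd : dx ≠ 0 ∨ dy ≠ 0 := by
      by_contra h
      push_neg at h
      apply hpq
      have h1 : q.1 = p.1 := by have := h.1; rw [hdx] at this; linarith
      have h2 : q.2 = p.2 := by have := h.2; rw [hdy] at this; linarith
      exact Prod.ext h1.symm h2.symm
    have hX : ∀ t ∈ Icc (0:ℝ) 1, 0 < p.1 + t * dx := by
      intro t ht
      have : p.1 + t * dx = (1 - t) * p.1 + t * q.1 := by rw [hdx]; ring
      rw [this]
      rcases lt_or_eq_of_le ht.2 with h | h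
      · have h1 : 0 < 1 - t := by linarith
        nlinarith [mul_nonneg ht.1 hq1.le]
      · rw [h]; simpa using hq1
    have hY : ∀ t ∈ Icc (0:ℝ) 1, 0 < p.2 + t * dy := by
      intro t ht
      have : p.2 + t * dy = (1 - t) * p.2 + t * q.2 := by rw [hdy]; ring
      rw [this]
      rcases lt_or_eq_of_le ht.2 with h | h
      · have h1 : 0 < 1 - t := by linarith
        nlinarith [mul_nonneg ht.1 hq2.le]
      · rw [h]; simpa using hq2
    have hsc := aux_strictConvexOn_line A B p.1 p.2 dx dy hA hB hX hY hd
    have h01 : (0:ℝ) ∈ Icc (0:ℝ) 1 := ⟨le_refl 0, zero_le_one⟩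
    have h11 : (1:ℝ) ∈ Icc (0:ℝ) 1 := ⟨zero_le_one, le_refl 1⟩
    have hlt := hsc.2 h01 h11 (by norm_num) ha hb hab
    have e0 : p.1 + (a * 0 + b * 1) * dx = (a • p + b • q).1 := by
      simp [hdx, Prod.smul_fst]
      nlinarith [hab]
    have e0' : p.2 + (a * 0 + b * 1) * dy = (a • p + b • q).2 := by
      simp [hdy, Prod.smul_snd]
      nlinarith [hab]
    simp only [mul_zero, mul_one, zero_add, smul_eq_mul, smul_zero, zero_add] at e0 e0' hlt
    have ev0 : p.1 + 0 * dx = p.1 := by ring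
    have ev0' : p.2 + 0 * dy = p.2 := by ring
    have ev1 : p.1 + 1 * dx = q.1 := by rw [hdx]; ring
    have ev1' : p.2 + 1 * dy = q.2 := by rw [hdy]; ring
    rw [ev0, ev0', ev1, ev1'] at hlt
    calc Real.log (A / ((a • p + b • q).1 * (a • p + b • q).2) + B)
        = Real.log (A / ((p.1 + b * dx) * (p.2 + b * dy)) + B) := by rw [e0, e0']
      _ < a * Real.log (A / (p.1 * p.2) + B) + b * Real.log (A / (q.1 * q.2) + B) := hlt
end

section
/- Let A > 0 and let x₀ > 0, y₀ > 0 be fixed, and set γ₀ = A/(x₀·y₀). Then for all x > 0 and y > 0, log₂(1 + A/(x·y)) ≥ log₂(1 + γ₀) − (γ₀ / (ln 2 · (1 + γ₀))) · (x/x₀ + y/y₀ − 2). -/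
private lemma key_log (c : ℝ) (hc : 0 < c) (t : ℝ) (ht : 0 < t) :
    Real.log (1 + c) - c / (1 + c) * (2 * t - 2) ≤ Real.log (1 + c / t ^ 2) := by
  have h1c : (0:ℝ) < 1 + c := by linarith
  set G : ℝ → ℝ := fun s => Real.log (s ^ 2 + c) - 2 * Real.log s
      + c / (1 + c) * (2 * s - 2) - Real.log (1 + c) with hG
  have hD : ∀ s : ℝ, 0 < s →
      HasDerivAt G (2 * s / (s ^ 2 + c) - 2 / s + c / (1 + c) * 2) s := by
    intro s hs
    have h1 : HasDerivAt (fun x : ℝ => Real.log (x ^ 2 + c))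
        ((2 * s ^ 1) / (s ^ 2 + c)) s := by
      have := HasDerivAt.log ((hasDerivAt_pow 2 s).add_const c) (by positivity)
      simpa using this
    have h2 : HasDerivAt (fun x : ℝ => 2 * Real.log x) (2 * s⁻¹) s :=
      (Real.hasDerivAt_log hs.ne').const_mul 2
    have h3 : HasDerivAt (fun x : ℝ => c / (1 + c) * (2 * x - 2)) (c / (1 + c) * 2) s := by
      simpa using (((hasDerivAt_id s).const_mul 2).sub_const 2).const_mul (c / (1 + c))
    have := ((h1.sub h2).add h3).sub_const (Real.log (1 + c))
    refine HasDerivAt.congr_deriv this ?_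
    ring
  have hderiv_eq : ∀ s : ℝ, 0 < s →
      2 * s / (s ^ 2 + c) - 2 / s + c / (1 + c) * 2
        = 2 * c * (s * (s ^ 2 + c) - (1 + c)) / (s * (s ^ 2 + c) * (1 + c)) := by
    intro s hs
    have h1 : s ^ 2 + c > 0 := by positivity
    field_simp
    try ring
  have hG1 : G 1 = 0 := by simp [hG]
  -- show 0 ≤ G t
  have hGt : 0 ≤ G t := by
    rcases le_total t 1 with hle | hge
    · have hanti : AntitoneOn G (Set.Icc t 1) := by
        apply antitoneOn_of_deriv_nonpos (convex_Icc t 1)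
        · intro s hs
          exact (hD s (lt_of_lt_of_le ht hs.1)).continuousAt.continuousWithinAt
        · intro s hs
          rw [interior_Icc] at hs
          exact (hD s (lt_trans ht hs.1)).differentiableAt.differentiableWithinAt
        · intro s hs
          rw [interior_Icc] at hs
          have hs0 : 0 < s := lt_trans ht hs.1
          rw [(hD s hs0).deriv, hderiv_eq s hs0]
          apply div_nonpos_of_nonpos_of_nonneg
          · have h1 : s ^ 3 ≤ 1 := by nlinarith [mul_nonneg (sub_nonneg.mpr hs.2.le) (by positivity : (0:ℝ) ≤ s^2+s+1)]
            have h2 : s * c ≤ c := by nlinarith [hs.2.le]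
            nlinarith
          · positivity
      have := hanti (Set.left_mem_Icc.mpr hle) (Set.right_mem_Icc.mpr hle) hle
      rw [hG1] at this; exact this
    · have hmono : MonotoneOn G (Set.Icc 1 t) := by
        apply monotoneOn_of_deriv_nonneg (convex_Icc 1 t)
        · intro s hs
          exact (hD s (lt_of_lt_of_le one_pos hs.1)).continuousAt.continuousWithinAt
        · intro s hs
          rw [interior_Icc] at hs
          exact (hD s (lt_trans one_pos hs.1)).differentiableAt.differentiableWithinAt
        · intro s hs
          rw [interior_Icc] at hs
          have hs0 : 0 < s := lt_trans one_pos hs.1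
          rw [(hD s hs0).deriv, hderiv_eq s hs0]
          apply div_nonneg _ (by positivity)
          have h1 : 1 ≤ s ^ 3 := by nlinarith [mul_nonneg (sub_nonneg.mpr hs.1.le) (by positivity : (0:ℝ) ≤ s^2+s+1)]
          have h2 : c ≤ s * c := by nlinarith [hs.1.le]
          nlinarith
      have := hmono (Set.left_mem_Icc.mpr hge) (Set.right_mem_Icc.mpr hge) hge
      rw [hG1] at this; exact this
  -- rewrite goal using G t
  have hlog : Real.log (1 + c / t ^ 2) = Real.log (t ^ 2 + c) - 2 * Real.log t := by
    have h1 : 1 + c / t ^ 2 = (t ^ 2 + c) / t ^ 2 := by field_simp; try ring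
    rw [h1, Real.log_div (by positivity) (by positivity), Real.log_pow]
    push_cast; ring
  rw [hlog]
  simp only [hG] at hGt
  linarith

/-- Tangent-plane lower bound G for the sensing rate (Proposition 3). -/
theorem sensing_rate_tangent_lower_bound (A x₀ y₀ : ℝ) (hA : 0 < A)
    (hx₀ : 0 < x₀) (hy₀ : 0 < y₀) (γ₀ : ℝ) (hγ₀ : γ₀ = A / (x₀ * y₀)) :
    ∀ x y : ℝ, 0 < x → 0 < y →
      Real.logb 2 (1 + γ₀) - (γ₀ / (Real.log 2 * (1 + γ₀))) * (x / x₀ + y / y₀ - 2)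
        ≤ Real.logb 2 (1 + A / (x * y)) := by
  intro x y hx hy
  have hγ : 0 < γ₀ := by rw [hγ₀]; positivity
  have h1γ : (0:ℝ) < 1 + γ₀ := by linarith
  set u := x / x₀ with hu
  set v := y / y₀ with hv
  have hupos : 0 < u := by positivity
  have hvpos : 0 < v := by positivity
  set t := Real.sqrt (u * v) with hts
  have ht : 0 < t := Real.sqrt_pos.mpr (by positivity)
  have ht2 : t ^ 2 = u * v := Real.sq_sqrt (by positivity)
  have hAxy : A / (x * y) = γ₀ / t ^ 2 := by
    rw [ht2, hγ₀, hu, hv]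
    field_simp
    try ring
  -- AM-GM: 2t ≤ u + v
  have hamgm : 2 * t ≤ u + v := by
    have h1 : u * v ≤ ((u + v) / 2) ^ 2 := by nlinarith [sq_nonneg (u - v)]
    have h2 : t ≤ (u + v) / 2 := by
      calc t = Real.sqrt (u * v) := rfl
        _ ≤ Real.sqrt (((u + v) / 2) ^ 2) := Real.sqrt_le_sqrt h1
        _ = (u + v) / 2 := Real.sqrt_sq (by positivity)
    linarith
  have hkey := key_log γ₀ hγ t ht
  have hcoef : 0 ≤ γ₀ / (1 + γ₀) := by positivity
  have hstep : Real.log (1 + γ₀) - γ₀ / (1 + γ₀) * (u + v - 2)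
      ≤ Real.log (1 + γ₀ / t ^ 2) := by
    have : γ₀ / (1 + γ₀) * (2 * t - 2) ≤ γ₀ / (1 + γ₀) * (u + v - 2) :=
      mul_le_mul_of_nonneg_left (by linarith) hcoef
    linarith
  have hlog2 : (0:ℝ) < Real.log 2 := Real.log_pos (by norm_num)
  rw [hAxy, Real.logb, Real.logb]
  rw [show Real.log (1 + γ₀) / Real.log 2
      - γ₀ / (Real.log 2 * (1 + γ₀)) * (u + v - 2)
      = (Real.log (1 + γ₀) - γ₀ / (1 + γ₀) * (u + v - 2)) / Real.log 2 by
    field_simp; try ring]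
  exact div_le_div_of_nonneg_right hstep hlog2.le
end
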